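/- arXiv:hep-th/9312193 — 4 statements merged into one kernel-verified Lean document; each statement's English description precedes it below -/
import Mathlib

section
/- Conversely, if w is a holomorphic function on a connected open subset of ℂ with w' never zero and S(w,z) = 0 identically, then w is the restriction of a Möbius transformation: there exist a, b, c, d ∈ ℂ with ad - bc ≠ 0 such that w(z) = (az+b)/(cz+d). -/
/-- The Schwarzian derivative `S(w,z) = w'''/w' - (3/2)(w''/w')²`. -/
noncomputable def schwarzian (w : ℂ → ℂ) (z : ℂ) : ℂ :=
  deriv (deriv (deriv w)) z / deriv w z
    - (3 / 2) * (deriv (deriv w) z / deriv w z) ^ 2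

/-- A function with vanishing derivative on a preconnected open set is constant. -/
lemma eq_const_of_hasDerivAt_zero {U : Set ℂ} (hU : IsOpen U) (hconn : IsPreconnected U)
    {f : ℂ → ℂ} (hf : ∀ z ∈ U, HasDerivAt f 0 z)
    {z₀ z : ℂ} (hz₀ : z₀ ∈ U) (hz : z ∈ U) : f z = f z₀ := by
  -- locally constant on balls
  have hball : ∀ x ∈ U, ∀ ε > 0, Metric.ball x ε ⊆ U →
      ∀ y ∈ Metric.ball x ε, f y = f x := by
    intro x hx ε hε hsub y hy
    refine (convex_ball x ε).is_const_of_fderivWithin_eq_zero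
      (fun p hp => ((hf p (hsub hp)).differentiableAt).differentiableWithinAt)
      (fun p hp => ?_) hy (Metric.mem_ball_self hε)
    have h0 : HasFDerivAt f (0 : ℂ →L[ℂ] ℂ) p := by
      have h := (hf p (hsub hp)).hasFDerivAt
      have e : (ContinuousLinearMap.toSpanSingleton ℂ (0 : ℂ)) = 0 := by
        ext; simp
      rwa [e] at h
    exact h0.hasFDerivWithinAt.fderivWithin
      (Metric.isOpen_ball.uniqueDiffOn p hp)
  set c := f z₀ with hc
  -- the sets where f = c and f ≠ c are both open
  have hV : IsOpen {p | p ∈ U ∧ f p = c} := by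
    rw [Metric.isOpen_iff]
    rintro p ⟨hpU, hpc⟩
    obtain ⟨ε, hε, hsub⟩ := Metric.isOpen_iff.1 hU p hpU
    exact ⟨ε, hε, fun y hy => ⟨hsub hy, (hball p hpU ε hε hsub y hy).trans hpc⟩⟩
  have hW : IsOpen {p | p ∈ U ∧ f p ≠ c} := by
    rw [isOpen_iff_mem_nhds]
    rintro p ⟨hpU, hpc⟩
    have hcont : ContinuousAt f p := (hf p hpU).differentiableAt.continuousAt
    filter_upwards [hcont.eventually_ne hpc, hU.mem_nhds hpU] with q hq hqU
    exact ⟨hqU, hq⟩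
  by_contra hne
  have h := hconn _ _ hV hW
    (fun p hp => by
      by_cases hfp : f p = c
      · exact Or.inl ⟨hp, hfp⟩
      · exact Or.inr ⟨hp, hfp⟩)
    ⟨z₀, hz₀, hz₀, rfl⟩ ⟨z, hz, hz, hne⟩
  obtain ⟨q, _, ⟨_, hq1⟩, ⟨_, hq2⟩⟩ := h
  exact hq2 hq1

/-- A holomorphic function on a connected open set with nonvanishing derivative
and identically vanishing Schwarzian derivative is the restriction of a
Möbius transformation. -/
theorem vanishing_schwarzian_implies_moebius
    (U : Set ℂ) (hU : IsOpen U) (hconn : IsConnected U)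
    (w : ℂ → ℂ) (hw : DifferentiableOn ℂ w U)
    (hw' : ∀ z ∈ U, deriv w z ≠ 0)
    (hS : ∀ z ∈ U, schwarzian w z = 0) :
    ∃ a b c d : ℂ, a * d - b * c ≠ 0 ∧
      ∀ z ∈ U, w z = (a * z + b) / (c * z + d) := by
  obtain ⟨z₀, hz₀⟩ := hconn.nonempty
  have hpre := hconn.isPreconnected
  set w1 := deriv w with hw1
  set w2 := deriv w1 with hw2
  set w3 := deriv w2 with hw3
  have hA : AnalyticOnNhd ℂ w U := hw.analyticOnNhd hU
  have hA1 : AnalyticOnNhd ℂ w1 U := hA.deriv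
  have hA2 : AnalyticOnNhd ℂ w2 U := hA1.deriv
  have hA3 : AnalyticOnNhd ℂ w3 U := hA2.deriv
  have dw : ∀ z ∈ U, HasDerivAt w (w1 z) z := fun z hz =>
    ((hA z hz).differentiableAt).hasDerivAt
  have d1 : ∀ z ∈ U, HasDerivAt w1 (w2 z) z := fun z hz =>
    ((hA1 z hz).differentiableAt).hasDerivAt
  have d2 : ∀ z ∈ U, HasDerivAt w2 (w3 z) z := fun z hz =>
    ((hA2 z hz).differentiableAt).hasDerivAt
  -- the key algebraic relation from S = 0
  have key : ∀ z ∈ U, 2 * w3 z * w1 z = 3 * (w2 z) ^ 2 := by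
    intro z hz
    have h := hS z hz
    have h' : w3 z / w1 z - 3 / 2 * (w2 z / w1 z) ^ 2 = 0 := h
    have h1 := hw' z hz
    rw [sub_eq_zero] at h'
    field_simp at h'
    have h2 : w1 z * (2 * w3 z * w1 z) = w1 z * (3 * w2 z ^ 2) := by
      linear_combination w1 z * h'
    exact mul_left_cancel₀ h1 h2
  -- Step 1: K = w2² / w1³ is constant
  set K : ℂ → ℂ := fun z => (w2 z) ^ 2 / (w1 z) ^ 3 with hK
  have hKd : ∀ z ∈ U, HasDerivAt K 0 z := by
    intro z hz
    have h1 := hw' z hz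
    have hnum : HasDerivAt (fun p => (w2 p) ^ 2) (2 * w2 z ^ 1 * w3 z) z :=
      (d2 z hz).pow 2
    have hden : HasDerivAt (fun p => (w1 p) ^ 3) (3 * w1 z ^ 2 * w2 z) z := by
      simpa using (d1 z hz).fun_pow 3
    have := hnum.div hden (pow_ne_zero 3 h1)
    refine this.congr_deriv ?_
    have hk := key z hz
    have hnum0 : 2 * w2 z ^ 1 * w3 z * w1 z ^ 3 - w2 z ^ 2 * (3 * w1 z ^ 2 * w2 z) = 0 := by
      linear_combination (w1 z ^ 2 * w2 z) * hk
    rw [hnum0, zero_div]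
  have hKconst : ∀ z ∈ U, K z = K z₀ :=
    fun z hz => eq_const_of_hasDerivAt_zero hU hpre hKd hz₀ hz
  by_cases hk0 : K z₀ = 0
  · -- w'' ≡ 0, so w is affine
    have h2z : ∀ z ∈ U, w2 z = 0 := by
      intro z hz
      have h := (hKconst z hz).trans hk0
      have h1 := hw' z hz
      have := div_eq_zero_iff.1 h
      rcases this with h | h
      · exact pow_eq_zero_iff (by norm_num) |>.1 h
      · exact absurd (pow_eq_zero_iff (by norm_num) |>.1 h) h1
    have h1c : ∀ z ∈ U, w1 z = w1 z₀ := by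
      intro z hz
      exact eq_const_of_hasDerivAt_zero hU hpre
        (fun p hp => by simpa [h2z p hp] using d1 p hp) hz₀ hz
    set a := w1 z₀ with ha
    have ha0 : a ≠ 0 := hw' z₀ hz₀
    have hgc : ∀ z ∈ U, w z - a * z = w z₀ - a * z₀ := by
      intro z hz
      refine eq_const_of_hasDerivAt_zero (f := fun p => w p - a * p) hU hpre (fun p hp => ?_) hz₀ hz
      have := (dw p hp).sub ((hasDerivAt_id p).const_mul a)
      exact this.congr_deriv (by simp [h1c p hp])
    refine ⟨a, w z₀ - a * z₀, 0, 1, by simpa using ha0, fun z hz => ?_⟩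
    have := hgc z hz
    simp only [zero_mul, zero_add, div_one]
    linear_combination this
  · -- w'' never vanishes
    have h2 : ∀ z ∈ U, w2 z ≠ 0 := by
      intro z hz h0
      apply hk0
      have hz' : K z = 0 := by
        show (w2 z) ^ 2 / (w1 z) ^ 3 = 0
        rw [h0]
        simp
      rw [← hKconst z hz]
      exact hz'
    -- Step 2: G = w1/w2 + z/2 is constant
    have hGd : ∀ z ∈ U, HasDerivAt (fun p => w1 p / w2 p + p / 2) 0 z := by
      intro z hz
      have h2z := h2 z hz
      have hdiv := (d1 z hz).div (d2 z hz) h2z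
      have hid : HasDerivAt (fun p : ℂ => p / 2) ((1 : ℂ)/2) z := by
        simpa using (hasDerivAt_id z).div_const 2
      have hsum := hdiv.add hid
      refine hsum.congr_deriv ?_
      have hk := key z hz
      field_simp
      linear_combination -hk
    have hGconst : ∀ z ∈ U, w1 z / w2 z + z / 2 = w1 z₀ / w2 z₀ + z₀ / 2 :=
      fun z hz => eq_const_of_hasDerivAt_zero hU hpre hGd hz₀ hz
    set c0 := w1 z₀ / w2 z₀ + z₀ / 2 with hc0
    have hrel : ∀ z ∈ U, w1 z = (c0 - z / 2) * w2 z := by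
      intro z hz
      have e := hGconst z hz
      have h2z := h2 z hz
      field_simp at e
      linear_combination e / 2
    set C := 2 * c0 with hC
    have hCz : ∀ z ∈ U, C - z ≠ 0 := by
      intro z hz h0
      apply hw' z hz
      rw [hrel z hz]
      have e : c0 - z / 2 = 0 := by rw [hC] at h0; linear_combination h0 / 2
      rw [e, zero_mul]
    -- Step 3: A = w1 * (C - z)^2 is constant
    have hAd : ∀ z ∈ U, HasDerivAt (fun p => w1 p * (C - p) ^ 2) 0 z := by
      intro z hz
      have hq : HasDerivAt (fun p : ℂ => (C - p) ^ 2) (2 * (C - z) ^ 1 * (0 - 1)) z :=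
        ((hasDerivAt_const z C).sub (hasDerivAt_id z)).pow 2
      have hm := (d1 z hz).mul hq
      refine hm.congr_deriv ?_
      rw [hrel z hz, hC]
      ring
    have hAconst : ∀ z ∈ U, w1 z * (C - z) ^ 2 = w1 z₀ * (C - z₀) ^ 2 :=
      fun z hz => eq_const_of_hasDerivAt_zero hU hpre hAd hz₀ hz
    set A0 := w1 z₀ * (C - z₀) ^ 2 with hA0def
    have hA0 : A0 ≠ 0 :=
      mul_ne_zero (hw' z₀ hz₀) (pow_ne_zero 2 (hCz z₀ hz₀))
    -- Step 4: B = w - A0/(C - z) is constant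
    have hBd : ∀ z ∈ U, HasDerivAt (fun p => w p - A0 * (C - p)⁻¹) 0 z := by
      intro z hz
      have hc := hCz z hz
      have hinv : HasDerivAt (fun p : ℂ => (C - p)⁻¹) (-(0 - 1) / (C - z) ^ 2) z :=
        ((hasDerivAt_const z C).sub (hasDerivAt_id z)).inv hc
      have hm := (dw z hz).sub (hinv.const_mul A0)
      refine hm.congr_deriv ?_
      have hA := hAconst z hz
      rw [← hA]
      field_simp
      ring
    have hBconst : ∀ z ∈ U, w z - A0 * (C - z)⁻¹ = w z₀ - A0 * (C - z₀)⁻¹ :=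
      fun z hz => eq_const_of_hasDerivAt_zero hU hpre hBd hz₀ hz
    set B0 := w z₀ - A0 * (C - z₀)⁻¹ with hB0def
    refine ⟨-B0, B0 * C + A0, -1, C, ?_, fun z hz => ?_⟩
    · have e : -B0 * C - (B0 * C + A0) * (-1) = A0 := by ring
      rw [e]
      exact hA0
    · have hB := hBconst z hz
      have hc := hCz z hz
      have hc' : (-1 : ℂ) * z + C ≠ 0 := fun h0 => hc (by linear_combination h0)
      rw [eq_div_iff hc']
      field_simp at hB
      linear_combination hB
end

section
/- The transition function x_α = Z + ln(e^{x_β} + 1), where Z ∈ ℂ has Im Z > 0 and the branch of logarithm is chosen with imaginary part in (-π, Im Z), maps the strip {x : -π < Im x < 0} holomorphically into the strip {x : -π < Im x < Im Z}, and satisfies Im x_α > Im Z + Im x_β for all x_β in the domain. -/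
open Complex

lemma exp_im_neg_of_strip {x : ℂ} (h1 : -Real.pi < x.im) (h2 : x.im < 0) :
    (Complex.exp x + 1).im < 0 := by
  have : (Complex.exp x).im = Real.exp x.re * Real.sin x.im := Complex.exp_im x
  have hs : Real.sin x.im < 0 := Real.sin_neg_of_neg_of_neg_pi_lt h2 h1
  have : (Complex.exp x).im < 0 := by
    rw [this]; exact mul_neg_of_pos_of_neg (Real.exp_pos _) hs
  simpa using this

lemma arg_gt_of_strip {x : ℂ} (h1 : -Real.pi < x.im) (h2 : x.im < 0) :
    x.im < Complex.arg (Complex.exp x + 1) := by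
  set w := Complex.exp x with hw
  have hw0 : w ≠ 0 := Complex.exp_ne_zero x
  have hargw : Complex.arg w = x.im := by
    have := Complex.log_exp h1 (le_of_lt (h2.trans Real.pi_pos))
    rw [hw, ← Complex.log_im, this]
  have hwi : w.im < 0 := by
    have := Complex.exp_im x
    rw [← hw] at this
    rw [this]
    exact mul_neg_of_pos_of_neg (Real.exp_pos _) (Real.sin_neg_of_neg_of_neg_pi_lt h2 h1)
  -- u = 1 + w⁻¹ has positive imaginary part
  set u := 1 + w⁻¹ with hu
  have hui : 0 < u.im := by
    have : u.im = -w.im / Complex.normSq w := by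
      simp [hu, Complex.inv_im]
    rw [this]
    exact div_pos (by linarith) (Complex.normSq_pos.2 hw0)
  have hu0 : u ≠ 0 := by
    intro h; rw [h] at hui; simp at hui
  have hargu_pos : 0 < Complex.arg u := by
    rcases lt_or_eq_of_le (Complex.arg_nonneg_iff.2 hui.le) with h | h
    · exact h
    · exfalso
      have := Complex.arg_eq_zero_iff.1 h.symm
      exact absurd this.2 (ne_of_gt hui)
  have hargu_lt : Complex.arg u ≤ Real.pi := Complex.arg_le_pi u
  have hargw_neg : Complex.arg w < 0 := Complex.arg_neg_iff.2 hwi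
  have hmul : w * u = w + 1 := by
    rw [hu, mul_add, mul_inv_cancel₀ hw0, mul_one]
  have hsum : Complex.arg w + Complex.arg u ∈ Set.Ioc (-Real.pi) Real.pi := by
    constructor
    · have := Complex.neg_pi_lt_arg w; linarith
    · linarith
  have harg := Complex.arg_mul hw0 hu0 hsum
  rw [hmul] at harg
  rw [harg, hargw]
  linarith

/-- The transition function `x ↦ Z + log(eˣ + 1)` (principal branch) maps the
strip `-π < Im x < 0` holomorphically into the strip `-π < Im x < Im Z`, and
satisfies `Im f(x) > Im Z + Im x` there. -/
theorem transition_function_strip (Z : ℂ) (hZ : 0 < Z.im) :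
    DifferentiableOn ℂ (fun x => Z + Complex.log (Complex.exp x + 1))
      {x : ℂ | -Real.pi < x.im ∧ x.im < 0} ∧
    ∀ x : ℂ, -Real.pi < x.im → x.im < 0 →
      (-Real.pi < (Z + Complex.log (Complex.exp x + 1)).im ∧
       (Z + Complex.log (Complex.exp x + 1)).im < Z.im ∧
       Z.im + x.im < (Z + Complex.log (Complex.exp x + 1)).im) := by
  constructor
  · intro x hx
    obtain ⟨h1, h2⟩ := hx
    have hslit : Complex.exp x + 1 ∈ Complex.slitPlane := by
      rw [Complex.mem_slitPlane_iff]
      exact Or.inr (ne_of_lt (exp_im_neg_of_strip h1 h2))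
    exact ((differentiable_const Z).differentiableAt.add
      ((Complex.differentiableAt_log hslit).comp x
        ((Complex.differentiable_exp x).add_const 1))).differentiableWithinAt
  · intro x h1 h2
    have hwi : (Complex.exp x + 1).im < 0 := exp_im_neg_of_strip h1 h2
    have harg_neg : Complex.arg (Complex.exp x + 1) < 0 := Complex.arg_neg_iff.2 hwi
    have harg_lb := Complex.neg_pi_lt_arg (Complex.exp x + 1)
    have harg_gt := arg_gt_of_strip h1 h2
    have him : (Z + Complex.log (Complex.exp x + 1)).im
        = Z.im + Complex.arg (Complex.exp x + 1) := by
      simp [Complex.add_im, Complex.log_im]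
    rw [him]
    refine ⟨by linarith, by linarith, by linarith⟩
end

section
/- Combining the transition function with orientation reversal: if x_α = Z_α + ln(e^{x_β}+1) with the branch as above, then under the substitution x_β ↦ Z_β - iπ - x_β one obtains the identity x_α = Z_α - ln(e^{-x_β} + 1) (for the appropriate branch), and in this case also Im x_α > Im Z_α + Im x_β. -/
open Complex

lemma ratio_lt (a b r1 r2 : ℝ) (hb : 0 < b) (hr1 : r1 = Real.sqrt (a^2 + b^2))
    (hr2 : r2 = Real.sqrt ((a+1)^2 + b^2)) : a * r2 < (a + 1) * r1 := by
  have h1 : 0 < r1 := by rw [hr1]; positivity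
  have h2 : 0 < r2 := by rw [hr2]; positivity
  have e1 : r1^2 = a^2 + b^2 := by rw [hr1]; exact Real.sq_sqrt (by positivity)
  have e2 : r2^2 = (a+1)^2 + b^2 := by rw [hr2]; exact Real.sq_sqrt (by positivity)
  rcases le_or_gt (a+1) 0 with h | h
  · have key : ((a+1)*r1)^2 < (a*r2)^2 := by nlinarith
    nlinarith [mul_nonpos_of_nonpos_of_nonneg h h1.le,
      mul_nonpos_of_nonpos_of_nonneg (by linarith : a ≤ 0) h2.le]
  · rcases le_or_gt a 0 with ha | ha
    · calc a * r2 ≤ 0 := mul_nonpos_of_nonpos_of_nonneg ha h2.le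
        _ < (a+1)*r1 := mul_pos h h1
    · have key : (a*r2)^2 < ((a+1)*r1)^2 := by nlinarith
      nlinarith [mul_pos ha h2, mul_pos h h1]

lemma mem_ratio {z : ℂ} (hz : z ≠ 0) : z.re / ‖z‖ ∈ Set.Icc (-1:ℝ) 1 := by
  have habs : (0:ℝ) < ‖z‖ := norm_pos_iff.mpr hz
  constructor
  · rw [le_div_iff₀ habs]
    have h1 := Complex.abs_re_le_norm z
    have h2 := neg_abs_le z.re
    nlinarith
  · rw [div_le_one habs]
    have h1 := Complex.abs_re_le_norm z
    have h2 := le_abs_self z.re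
    linarith

lemma arg_add_one_lt {z : ℂ} (hz : 0 < z.im) : (z + 1).arg < z.arg := by
  have hz1 : 0 < (z + 1).im := by simpa using hz
  have hne : z ≠ 0 := fun h => by simp [h] at hz
  have hne1 : z + 1 ≠ 0 := fun h => by rw [h] at hz1; simp at hz1
  rw [Complex.arg_of_im_pos hz, Complex.arg_of_im_pos hz1]
  have habs : (0:ℝ) < ‖z‖ := norm_pos_iff.mpr hne
  have habs1 : (0:ℝ) < ‖z+1‖ := norm_pos_iff.mpr hne1
  apply Real.strictAntiOn_arccos (mem_ratio hne) (mem_ratio hne1)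
  rw [div_lt_div_iff₀ habs habs1]
  have h1 : ‖z‖ = Real.sqrt (z.re^2 + z.im^2) := by
    rw [Complex.norm_def, Complex.normSq_apply]; ring_nf
  have h2 : ‖z+1‖ = Real.sqrt ((z.re+1)^2 + z.im^2) := by
    rw [Complex.norm_def, Complex.normSq_apply]; simp; ring_nf
  simp only [Complex.add_re, Complex.one_re]
  exact ratio_lt z.re z.im _ _ hz h1 h2

/-- After orientation reversal the transition function takes the form
`x_α = Z_α - log(e^{-x_β} + 1)`; this satisfies the multiplicative identity
`e^{x_α}·(e^{-x_β}+1) = e^{Z_α}` and the inequality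
`Im x_α > Im Z_α + Im x_β`. -/
theorem reversed_transition_function (Z : ℂ) (hZ : 0 < Z.im) :
    ∀ x : ℂ, -Real.pi < x.im → x.im < 0 →
      (Complex.exp (Z - Complex.log (Complex.exp (-x) + 1))
          * (Complex.exp (-x) + 1) = Complex.exp Z) ∧
      Z.im + x.im < (Z - Complex.log (Complex.exp (-x) + 1)).im := by
  intro x h1 h2
  have hb : 0 < (-x).im := by simp; linarith
  have hbpi : (-x).im < Real.pi := by simp; linarith
  have him : 0 < (Complex.exp (-x)).im := by
    rw [Complex.exp_im]
    exact mul_pos (Real.exp_pos _) (Real.sin_pos_of_pos_of_lt_pi hb hbpi)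
  have hne : Complex.exp (-x) + 1 ≠ 0 := by
    intro h
    have : (Complex.exp (-x) + 1).im = 0 := by rw [h]; rfl
    simp at this; linarith
  constructor
  · rw [Complex.exp_sub, Complex.exp_log hne]
    field_simp
  · have harg : (Complex.exp (-x) + 1).arg < (-x).im := by
      have := arg_add_one_lt him
      have hargexp : (Complex.exp (-x)).arg = (-x).im := by
        rw [Complex.arg_of_im_pos him]
        have habs : ‖Complex.exp (-x)‖ = Real.exp ((-x).re) := Complex.norm_exp _
        rw [Complex.exp_re, habs]
        rw [mul_comm, mul_div_assoc, div_self (Real.exp_pos _).ne', mul_one]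
        exact Real.arccos_cos hb.le hbpi.le
      linarith
    have : (Complex.log (Complex.exp (-x) + 1)).im < (-x).im := by
      rw [Complex.log_im]; exact harg
    simp only [Complex.sub_im, Complex.neg_im] at this ⊢
    linarith
end

section
/- If Z₁, ..., Z_n ∈ ℂ satisfy Z₁ + ⋯ + Z_n = 2πi and e^{Z₁} + e^{Z₁+Z₂} + ⋯ + e^{Z₁+⋯+Z_n} = 0, then the product of matrices h(Z_n)·s·h(Z_{n-1})·s⋯h(Z₁)·s around the corresponding face is a scalar matrix, i.e., the monodromy of the flat PGL(2,ℂ) connection around that face is trivial (here s = [[1,1],[-1,0]], h(Z)=[[-1,-1],[e^Z+1,1]]). -/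
open Finset

/-- The short-edge matrix `s = [[1,1],[-1,0]]`. -/
def sMat : Matrix (Fin 2) (Fin 2) ℂ := !![1, 1; -1, 0]

/-- The edge matrix `h(Z) = [[-1,-1],[e^Z+1,1]]`. -/
noncomputable def hMat (Z : ℂ) : Matrix (Fin 2) (Fin 2) ℂ :=
  !![-1, -1; Complex.exp Z + 1, 1]

/-- Sum of exponentials of prefix sums. -/
noncomputable def Ssum : List ℂ → ℂ
  | [] => 0
  | z :: L => Complex.exp z * (1 + Ssum L)

lemma key_prod (L : List ℂ) :
    (L.map fun z => hMat z * sMat).reverse.prod =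
      !![Complex.exp L.sum - Ssum L, Complex.exp L.sum - Ssum L - 1;
         Ssum L, Ssum L + 1] := by
  induction L with
  | nil => simp [Ssum, Matrix.one_fin_two]
  | cons z L ih =>
      simp only [List.map_cons, List.reverse_cons, List.prod_append, List.prod_cons,
        List.prod_nil, mul_one, ih, Ssum, List.sum_cons, Complex.exp_add]
      rw [hMat, sMat, Matrix.mul_fin_two, Matrix.mul_fin_two]
      congr 1 <;> ring

lemma Iic_succ_eq (n : ℕ) (i : Fin n) :
    Finset.Iic i.succ = insert (0 : Fin (n + 1)) ((Finset.Iic i).map (Fin.succEmb n)) := by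
  ext j
  simp only [Finset.mem_Iic, Finset.mem_insert, Finset.mem_map]
  cases j using Fin.cases with
  | zero => simp [Fin.zero_le]
  | succ k =>
      simp [Fin.succ_le_succ_iff, Fin.succEmb, (Fin.succ_injective n).eq_iff,
        (Fin.succ_ne_zero k)]

lemma Ssum_ofFn (n : ℕ) (Z : Fin n → ℂ) :
    Ssum (List.ofFn Z) = ∑ i : Fin n, Complex.exp (∑ j ∈ Finset.Iic i, Z j) := by
  induction n with
  | zero => simp [Ssum]
  | succ n ih =>
      rw [List.ofFn_succ, Ssum, ih (fun i => Z i.succ), Fin.sum_univ_succ]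
      have h0 : (Finset.Iic (0 : Fin (n + 1))) = {0} := by
        ext j; simp [Fin.le_zero_iff]
      rw [h0]
      have hIic : ∀ i : Fin n, ∑ j ∈ Finset.Iic i.succ, Z j
          = Z 0 + ∑ j ∈ Finset.Iic i, Z j.succ := by
        intro i
        rw [Iic_succ_eq, Finset.sum_insert (by simp [Fin.succEmb, Fin.succ_ne_zero]),
          Finset.sum_map]
        rfl
      simp only [hIic, Complex.exp_add, Finset.sum_singleton]
      rw [mul_add, mul_one, Finset.mul_sum]

/-- If `Z₁ + ⋯ + Z_n = 2πi` and `Σ_k e^{Z₁+⋯+Z_k} = 0`, then the monodromy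
`h(Z_n)·s ⋯ h(Z₁)·s` around the corresponding face is a nonzero scalar matrix,
i.e. trivial in `PGL(2, ℂ)`. -/
theorem face_monodromy_trivial (n : ℕ) (Z : Fin n → ℂ)
    (hsum : ∑ i, Z i = 2 * Real.pi * Complex.I)
    (hexp : ∑ i : Fin n, Complex.exp (∑ j ∈ Finset.Iic i, Z j) = 0) :
    ∃ c : ℂ, c ≠ 0 ∧
      (List.ofFn fun i : Fin n => hMat (Z i) * sMat).reverse.prod
        = c • (1 : Matrix (Fin 2) (Fin 2) ℂ) := by
  refine ⟨1, one_ne_zero, ?_⟩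
  have h1 : (List.ofFn fun i : Fin n => hMat (Z i) * sMat)
      = (List.ofFn Z).map fun z => hMat z * sMat := by
    simp [List.ofFn_eq_map, List.map_map]
  rw [h1, key_prod, Ssum_ofFn, hexp, List.sum_ofFn]
  have hE : Complex.exp (∑ i, Z i) = 1 := by
    rw [hsum]
    simpa using Complex.exp_int_mul_two_pi_mul_I 1
  rw [hE]
  simp [Matrix.one_fin_two]
end
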